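/- Let D and D̄ be star tree metrics on 4 taxa with pendant weights (a,d,c,e) and (ā,d̄,c̄,ē) at leaves 1,2,3,4 respectively, all weights positive. Define s=(ā+c̄)−(a+c), t=(d̄+ē)−(d+e), x=(ā+ē)−(a+e), y=(d̄+c̄)−(d+c), u=(ā+d̄)−(a+d), w=(c̄+ē)−(c+e), and z⁺=max(z,0). Let T = D⊕D̄. Then T is a tree metric realizing the quartet (12|34), i.e. T(1,3)+T(2,4) = T(1,4)+T(2,3) > T(1,2)+T(3,4), if and only if u⁺ + w⁺ < s⁺ + t⁺ = x⁺ + y⁺. -/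
import Mathlib

lemma max_eq_add_max_sub (p q : ℝ) : max p q = p + max (q - p) 0 := by
  rcases le_total p q with h | h
  · rw [max_eq_right h, max_eq_left (by linarith : (0:ℝ) ≤ q - p)]; ring
  · rw [max_eq_left h, max_eq_right (by linarith : q - p ≤ (0:ℝ))]; ring

/-- With `D`, `D̄` star tree metrics on 4 taxa as above, the mixture
`T = D ⊕ D̄` is a tree metric realizing the quartet (12|34), i.e.
`T(1,3)+T(2,4) = T(1,4)+T(2,3) > T(1,2)+T(3,4)`, if and only if
`u⁺ + w⁺ < s⁺ + t⁺ = x⁺ + y⁺`. -/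
theorem mixture_quartet_characterization
    (a d c e ab db cb eb : ℝ)
    (ha : 0 < a) (hd : 0 < d) (hc : 0 < c) (he : 0 < e)
    (hab : 0 < ab) (hdb : 0 < db) (hcb : 0 < cb) (heb : 0 < eb)
    (s t x y u w : ℝ)
    (hs : s = (ab + cb) - (a + c)) (ht : t = (db + eb) - (d + e))
    (hx : x = (ab + eb) - (a + e)) (hy : y = (db + cb) - (d + c))
    (hu : u = (ab + db) - (a + d)) (hw : w = (cb + eb) - (c + e)) :
    (max (a + c) (ab + cb) + max (d + e) (db + eb)
        = max (a + e) (ab + eb) + max (d + c) (db + cb) ∧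
     max (a + d) (ab + db) + max (c + e) (cb + eb)
        < max (a + c) (ab + cb) + max (d + e) (db + eb))
    ↔ (max u 0 + max w 0 < max s 0 + max t 0 ∧
       max s 0 + max t 0 = max x 0 + max y 0) := by
  subst hs ht hx hy hu hw
  rw [max_eq_add_max_sub (a+c), max_eq_add_max_sub (d+e),
      max_eq_add_max_sub (a+e), max_eq_add_max_sub (d+c),
      max_eq_add_max_sub (a+d), max_eq_add_max_sub (c+e)]
  constructor
  · rintro ⟨h1, h2⟩; exact ⟨by linarith, by linarith⟩
  · rintro ⟨h1, h2⟩; exact ⟨by linarith, by linarith⟩
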